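/- Let Y be a closed subspace of a Banach space X. If the closed unit ball B_Y has the 1½-ball property in X, then the subspace Y has the 1½-ball property in X. -/
import Mathlib


/-- If the closed unit ball `B_Y` of a closed subspace `Y` of a Banach
space `X` has the 1½-ball property in `X`, then `Y` has the 1½-ball property in `X`. -/
theorem stmt_9 {X : Type*} [NormedAddCommGroup X] [NormedSpace ℝ X] [CompleteSpace X]
    (Y : Subspace ℝ X) (hYcl : IsClosed (Y : Set X))
    (hBball : ∀ (x y : X) (r₁ r₂ : ℝ), 0 < r₁ → 0 < r₂ →
      y ∈ {z : X | z ∈ Y ∧ ‖z‖ ≤ 1} →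
      (Metric.closedBall x r₁ ∩ {z : X | z ∈ Y ∧ ‖z‖ ≤ 1}).Nonempty →
      ‖x - y‖ < r₁ + r₂ →
      (Metric.closedBall x r₁ ∩ Metric.closedBall y r₂ ∩ {z : X | z ∈ Y ∧ ‖z‖ ≤ 1}).Nonempty) :
    ∀ (x y : X) (r₁ r₂ : ℝ), 0 < r₁ → 0 < r₂ → y ∈ Y →
      (Metric.closedBall x r₁ ∩ (Y : Set X)).Nonempty → ‖x - y‖ < r₁ + r₂ →
      (Metric.closedBall x r₁ ∩ Metric.closedBall y r₂ ∩ (Y : Set X)).Nonempty := by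
  intro x y r₁ r₂ hr₁ hr₂ hyY hne hxy
  obtain ⟨w, hwball, hwY⟩ := hne
  set lam : ℝ := max (max ‖y‖ ‖w‖) 1 with hlam
  have hlam1 : (1 : ℝ) ≤ lam := le_max_right _ _
  have hlampos : 0 < lam := lt_of_lt_of_le one_pos hlam1
  have hylam : ‖y‖ ≤ lam := le_trans (le_max_left _ _) (le_max_left _ _)
  have hwlam : ‖w‖ ≤ lam := le_trans (le_max_right _ _) (le_max_left _ _)
  have key := hBball (lam⁻¹ • x) (lam⁻¹ • y) (r₁ / lam) (r₂ / lam)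
    (div_pos hr₁ hlampos) (div_pos hr₂ hlampos)
    ⟨Y.smul_mem _ hyY, by
      rw [norm_smul, norm_inv, Real.norm_of_nonneg hlampos.le]
      rw [inv_mul_le_iff₀ hlampos, mul_one]; exact hylam⟩
    ⟨lam⁻¹ • w, by
      constructor
      · rw [Metric.mem_closedBall, dist_eq_norm, ← smul_sub, norm_smul, norm_inv,
          Real.norm_of_nonneg hlampos.le, inv_mul_le_iff₀ hlampos, mul_div_cancel₀ _ hlampos.ne']
        rw [← dist_eq_norm]
        exact hwball
      · refine ⟨Y.smul_mem _ hwY, ?_⟩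
        rw [norm_smul, norm_inv, Real.norm_of_nonneg hlampos.le,
          inv_mul_le_iff₀ hlampos, mul_one]
        exact hwlam⟩
    (by
      rw [← smul_sub, norm_smul, norm_inv, Real.norm_of_nonneg hlampos.le, ← add_div,
        inv_mul_eq_div, div_lt_div_iff_of_pos_right hlampos]
      exact hxy)
  obtain ⟨z, ⟨hz1, hz2⟩, hzY, _⟩ := key
  refine ⟨lam • z, ⟨?_, ?_⟩, Y.smul_mem _ hzY⟩
  · rw [Metric.mem_closedBall, dist_eq_norm]
    have : lam • z - x = lam • (z - lam⁻¹ • x) := by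
      rw [smul_sub, smul_inv_smul₀ hlampos.ne']
    rw [this, norm_smul, Real.norm_of_nonneg hlampos.le]
    calc lam * ‖z - lam⁻¹ • x‖ ≤ lam * (r₁ / lam) := by
          have := Metric.mem_closedBall.mp hz1
          rw [dist_eq_norm] at this
          exact mul_le_mul_of_nonneg_left this hlampos.le
      _ = r₁ := by field_simp
  · rw [Metric.mem_closedBall, dist_eq_norm]
    have : lam • z - y = lam • (z - lam⁻¹ • y) := by
      rw [smul_sub, smul_inv_smul₀ hlampos.ne']
    rw [this, norm_smul, Real.norm_of_nonneg hlampos.le]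
    calc lam * ‖z - lam⁻¹ • y‖ ≤ lam * (r₂ / lam) := by
          have := Metric.mem_closedBall.mp hz2
          rw [dist_eq_norm] at this
          exact mul_le_mul_of_nonneg_left this hlampos.le
      _ = r₂ := by field_simp
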